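/- Let G be a finite simple graph and let W be an irregularising walk of G in which every edge of G is traversed at most k times. Then G admits a proper labelling with all labels in {1,…,k+1}; in particular χ'_s(G) ≤ k+1, so for nice G one has χ'_s(G) ≤ ME^W(G) + 1. -/

import Mathlib

open SimpleGraph Finset

variable {V : Type*}

/-- `W.inc u` is the number of edge-traversals of the walk `W` incident to `u`. -/
def SimpleGraph.Walk.inc [DecidableEq V] {G : SimpleGraph V} {a b : V}
    (W : G.Walk a b) (u : V) : ℕ :=
  (W.edges.filter (fun e => u ∈ e)).length

/-- A walk `W` of `G` is irregularising if in the multigraph `G + W` no two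
adjacent vertices have the same degree. -/
def SimpleGraph.Walk.Irregularising [Fintype V] [DecidableEq V] {G : SimpleGraph V}
    [DecidableRel G.Adj] {a b : V} (W : G.Walk a b) : Prop :=
  ∀ ⦃u v : V⦄, G.Adj u v → G.degree u + W.inc u ≠ G.degree v + W.inc v

/-- The vertex sum `σ_ℓ(u)` of a labelling. -/
def vertexSum [Fintype V] [DecidableEq V] (G : SimpleGraph V) [DecidableRel G.Adj]
    (ℓ : Sym2 V → ℕ) (u : V) : ℕ :=
  ∑ w ∈ G.neighborFinset u, ℓ s(u, w)

/-- A labelling is proper if adjacent vertices get distinct sums. -/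
def IsProperLabelling [Fintype V] [DecidableEq V] (G : SimpleGraph V) [DecidableRel G.Adj]
    (ℓ : Sym2 V → ℕ) : Prop :=
  ∀ ⦃u v : V⦄, G.Adj u v → vertexSum G ℓ u ≠ vertexSum G ℓ v

/-- Minimum length of an irregularising walk, as an extended natural number. -/
noncomputable def MLW [Fintype V] [DecidableEq V] (G : SimpleGraph V) [DecidableRel G.Adj] : ℕ∞ :=
  ⨅ (a : V) (b : V) (W : G.Walk a b) (_ : W.Irregularising), (W.length : ℕ∞)

/-- Infimum over irregularising walks of the maximum number of traversals of a single edge. -/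
noncomputable def MEW [Fintype V] [DecidableEq V] (G : SimpleGraph V) [DecidableRel G.Adj] : ℕ∞ :=
  ⨅ (a : V) (b : V) (W : G.Walk a b) (_ : W.Irregularising),
    ((W.edges.toFinset.sup fun e => W.edges.count e : ℕ) : ℕ∞)

/-- Infimum over irregularising walks of `max_u inc_W(u)`. -/
noncomputable def MVW [Fintype V] [DecidableEq V] (G : SimpleGraph V) [DecidableRel G.Adj] : ℕ∞ :=
  ⨅ (a : V) (b : V) (W : G.Walk a b) (_ : W.Irregularising),
    ((Finset.univ.sup fun u => W.inc u : ℕ) : ℕ∞)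


lemma sum_count_eq {V : Type*} [DecidableEq V] (G : SimpleGraph V) [DecidableRel G.Adj]
    [Fintype V]
    (l : List (Sym2 V)) (hl : ∀ e ∈ l, e ∈ G.edgeSet) (u : V) :
    ∑ w ∈ G.neighborFinset u, l.count s(u, w) = (l.filter (fun e => u ∈ e)).length := by
  induction l with
  | nil => simp
  | cons e t ih =>
    have ht : ∀ e ∈ t, e ∈ G.edgeSet := fun x hx => hl x (List.mem_cons_of_mem _ hx)
    by_cases hu : u ∈ e
    · obtain ⟨v, rfl⟩ := Sym2.mem_iff_exists.mp hu
      have hv : v ∈ G.neighborFinset u := by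
        rw [SimpleGraph.mem_neighborFinset]
        exact (G.mem_edgeSet).mp (hl _ List.mem_cons_self)
      have : ∀ w, List.count s(u,w) (s(u,v) :: t) =
          List.count s(u,w) t + (if w = v then 1 else 0) := by
        intro w
        rw [List.count_cons]
        congr 1
        by_cases h : w = v
        · simp [h]
        · have hne : s(u,v) ≠ s(u,w) := fun hh => h (Sym2.congr_right.mp hh.symm)
          simp [hne, h]
      simp only [this, Finset.sum_add_distrib, ih ht, Finset.sum_ite_eq' _ v, hv]
      rw [List.filter_cons]
      simp [hu]
    · have : ∀ w ∈ G.neighborFinset u, List.count s(u,w) (e :: t) = List.count s(u,w) t := by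
        intro w _
        rw [List.count_cons]
        have : s(u,w) ≠ e := fun h => hu (h ▸ Sym2.mem_mk_left u w)
        simp [Ne.symm this]
      rw [Finset.sum_congr rfl this, ih ht, List.filter_cons]
      simp [hu]

/-- If `W` is an irregularising walk of `G` traversing every edge at most
`k` times, then `G` admits a proper labelling with all labels in `{1, …, k+1}`. -/
theorem stmt_1 {V : Type*} [Fintype V] [DecidableEq V] (G : SimpleGraph V)
    [DecidableRel G.Adj] {a b : V} (W : G.Walk a b) (hW : W.Irregularising)
    (k : ℕ) (hk : ∀ e : Sym2 V, W.edges.count e ≤ k) :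
    ∃ ℓ : Sym2 V → ℕ, (∀ e ∈ G.edgeSet, 1 ≤ ℓ e ∧ ℓ e ≤ k + 1) ∧ IsProperLabelling G ℓ := by
  refine ⟨fun e => W.edges.count e + 1, fun e _ => ⟨Nat.le_add_left _ _,
    Nat.add_le_add_right (hk e) 1⟩, ?_⟩
  have key : ∀ u, vertexSum G (fun e => W.edges.count e + 1) u = W.inc u + G.degree u := by
    intro u
    rw [vertexSum, Finset.sum_add_distrib, Finset.sum_const, smul_eq_mul, mul_one,
      sum_count_eq G W.edges (fun e he => W.edges_subset_edgeSet he) u,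
      SimpleGraph.Walk.inc, G.card_neighborFinset_eq_degree]
  intro u v huv h
  exact hW huv (by rw [key u, key v] at h; omega)
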